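/- Let G be a Lie group and ζ ∈ T*G. Then the intersection of the level sets (J^R)⁻¹(J^R(ζ)) ∩ (J^L)⁻¹(J^L(ζ)) equals { (T R_{γ⁻¹})ᵗ(ζ) : γ ∈ G_{J^R(ζ)} }, where G_{J^R(ζ)} is the isotropy subgroup of J^R(ζ) for the coadjoint action of G on 𝔤*. -/

import Mathlib

open Manifold

noncomputable section

variable {E : Type*} [NormedAddCommGroup E] [NormedSpace ℝ E]
  {H : Type*} [TopologicalSpace H] (I : ModelWithCorners ℝ E H)
  {G : Type*} [TopologicalSpace G] [ChartedSpace H G] [Group G] [LieGroup I (⊤ : ℕ∞) G]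

/-- The momentum map of the lift to `T*G` of the action of `G` on itself by left
translations: `J^L(ζ) = (T_e R_{π(ζ)})ᵗ (ζ)`, where `R_x` is right translation. -/
def JL (x : G) (ζ : TangentSpace I x →L[ℝ] ℝ) : TangentSpace I (1 : G) →L[ℝ] ℝ :=
  ζ.comp (mfderiv I I (fun y : G => y * x) (1 : G))

/-- The momentum map of the lift to `T*G` of the action of `G` on itself by right
translations: `J^R(ζ) = (T_e L_{π(ζ)})ᵗ (ζ)`, where `L_x` is left translation. -/
def JR (x : G) (ζ : TangentSpace I x →L[ℝ] ℝ) : TangentSpace I (1 : G) →L[ℝ] ℝ :=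
  ζ.comp (mfderiv I I (fun y : G => x * y) (1 : G))

/-- The adjoint representation: `Ad_g = T_e (L_g ∘ R_{g⁻¹}) : 𝔤 → 𝔤`. -/
def Ad (g : G) : TangentSpace I (1 : G) →L[ℝ] TangentSpace I (1 : G) :=
  mfderiv I I (fun y : G => g * y * g⁻¹) (1 : G)

/-- The coadjoint representation: `Ad*_g = (Ad_{g⁻¹})ᵗ : 𝔤* → 𝔤*`. -/
def AdStar (g : G) (ξ : TangentSpace I (1 : G) →L[ℝ] ℝ) :
    TangentSpace I (1 : G) →L[ℝ] ℝ :=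
  ξ.comp (Ad I g⁻¹)

/-- The lift to the cotangent bundle `T*G` of the action of `G` on itself by right
translations: `Φ̂^R(ζ, g) = (T R_{g⁻¹})ᵗ (ζ)`, a covector at `π(ζ)·g`. -/
def PhiR (x : G) (ζ : TangentSpace I x →L[ℝ] ℝ) (g : G) :
    Σ y : G, (TangentSpace I y →L[ℝ] ℝ) :=
  ⟨x * g, ζ.comp (mfderiv I I (fun y : G => y * g⁻¹) (x * g))⟩

/-- The lift to the cotangent bundle `T*G` of the action of `G` on itself by left
translations: `Φ̂^L(g, ζ) = (T L_{g⁻¹})ᵗ (ζ)`, a covector at `g·π(ζ)`. -/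
def PhiL (g : G) (x : G) (ζ : TangentSpace I x →L[ℝ] ℝ) :
    Σ y : G, (TangentSpace I y →L[ℝ] ℝ) :=
  ⟨g * x, ζ.comp (mfderiv I I (fun y : G => g⁻¹ * y) (g * x))⟩

lemma mfd_congr {f g : G → G} (h : ∀ z, f z = g z) (p : G) :
    mfderiv I I f p = mfderiv I I g p := by rw [funext h]

lemma smoothR (a : G) : MDifferentiable I I (fun z : G => z * a) :=
  fun _ => mdifferentiableAt_mul_right

lemma smoothL (a : G) : MDifferentiable I I (fun z : G => a * z) :=
  fun _ => mdifferentiableAt_mul_left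

lemma smoothC (g : G) : MDifferentiable I I (fun z : G => g * z * g⁻¹) := fun p =>
  (((contMDiff_mul_right (a := g⁻¹)).comp (contMDiff_mul_left (a := g))).mdifferentiable
    (by simp : ((⊤ : ℕ∞) : WithTop ℕ∞) ≠ 0)) p

lemma comp_mfd {f g : G → G} (hf : MDifferentiable I I f) (hg : MDifferentiable I I g)
    (p q : G) (hq : g p = q) :
    (mfderiv I I f q).comp (mfderiv I I g p) = mfderiv I I (fun z => f (g z)) p := by
  subst hq; exact (mfderiv_comp p (hf _) (hg _)).symm

lemma FRgen (a b p q : G) (hq : p * a = q) :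
    (mfderiv I I (fun z : G => z * b) q).comp (mfderiv I I (fun z : G => z * a) p)
      = mfderiv I I (fun z : G => z * (a * b)) p := by
  rw [comp_mfd I (smoothR I b) (smoothR I a) p q hq]
  exact mfd_congr I (fun z => (mul_assoc z a b)) p

lemma mfd_triv (c : G) (hc : c = 1) (p : G) :
    mfderiv I I (fun z : G => z * c) p = ContinuousLinearMap.id ℝ (TangentSpace I p) := by
  subst hc
  rw [mfd_congr I (fun z => mul_one z) p]
  exact mfderiv_id

lemma Ad_mul (a b : G) : (Ad I a).comp (Ad I b) = Ad I (a * b) := by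
  unfold Ad
  refine (comp_mfd I (smoothC I a) (smoothC I b) 1 1 (by simp)).trans ?_
  exact mfd_congr I (fun z => by group) 1

lemma Ad_one : Ad I (1 : G) = ContinuousLinearMap.id ℝ (TangentSpace I (1 : G)) := by
  unfold Ad
  rw [mfd_congr I (g := fun z : G => z) (fun z : G => by simp) 1]
  exact mfderiv_id

lemma adstar_adstar (g : G) (ξ : TangentSpace I (1 : G) →L[ℝ] ℝ) :
    AdStar I g (AdStar I g⁻¹ ξ) = ξ := by
  unfold AdStar
  rw [ContinuousLinearMap.comp_assoc, Ad_mul, inv_inv, mul_inv_cancel, Ad_one,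
    ContinuousLinearMap.comp_id]

lemma adstar_adstar' (g : G) (ξ : TangentSpace I (1 : G) →L[ℝ] ℝ) :
    AdStar I g⁻¹ (AdStar I g ξ) = ξ := by
  have := adstar_adstar I g⁻¹ ξ
  rwa [inv_inv] at this

lemma JR_phi (x γ : G) (ζ : TangentSpace I x →L[ℝ] ℝ) :
    JR I (x * γ) (ζ.comp (mfderiv I I (fun z : G => z * γ⁻¹) (x * γ)))
      = AdStar I γ⁻¹ (JR I x ζ) := by
  unfold JR AdStar Ad
  rw [inv_inv]
  refine (ContinuousLinearMap.comp_assoc _ _ _).trans (Eq.trans ?_ (ContinuousLinearMap.comp_assoc _ _ _).symm)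
  congr 1
  refine (comp_mfd I (smoothR I γ⁻¹) (smoothL I (x * γ)) 1 (x * γ) (mul_one _)).trans
    (Eq.trans ?_ (comp_mfd I (smoothL I x) (smoothC I γ) 1 1 (by simp)).symm)
  exact mfd_congr I (fun z => by group) 1

lemma JL_phi (x γ : G) (ζ : TangentSpace I x →L[ℝ] ℝ) :
    JL I (x * γ) (ζ.comp (mfderiv I I (fun z : G => z * γ⁻¹) (x * γ)))
      = JL I x ζ := by
  unfold JL
  refine (ContinuousLinearMap.comp_assoc _ _ _).trans ?_
  congr 1
  refine (comp_mfd I (smoothR I γ⁻¹) (smoothR I (x * γ)) 1 (x * γ) (one_mul _)).trans ?_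
  exact mfd_congr I (fun z => by group) 1

lemma JR_of_sig (x γ y : G) (ζ : TangentSpace I x →L[ℝ] ℝ) (η : TangentSpace I y →L[ℝ] ℝ)
    (h : (⟨y, η⟩ : Σ z : G, (TangentSpace I z →L[ℝ] ℝ)) = PhiR I x ζ γ) :
    JR I y η = AdStar I γ⁻¹ (JR I x ζ) := by
  unfold PhiR at h
  injection h with h1 h2
  subst h1
  rw [h2]
  exact JR_phi I x γ ζ

lemma JL_of_sig (x γ y : G) (ζ : TangentSpace I x →L[ℝ] ℝ) (η : TangentSpace I y →L[ℝ] ℝ)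
    (h : (⟨y, η⟩ : Σ z : G, (TangentSpace I z →L[ℝ] ℝ)) = PhiR I x ζ γ) :
    JL I y η = JL I x ζ := by
  unfold PhiR at h
  injection h with h1 h2
  subst h1
  rw [h2]
  exact JL_phi I x γ ζ

/-- For `ζ ∈ T*G` (a covector at `x`), the intersection of the level
sets `(J^R)⁻¹(J^R(ζ)) ∩ (J^L)⁻¹(J^L(ζ))` equals
`{ (T R_{γ⁻¹})ᵗ(ζ) : γ ∈ G_{J^R(ζ)} } = { Φ̂^R(ζ, γ) : γ ∈ G_{J^R(ζ)} }`, where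
`G_{J^R(ζ)}` is the isotropy subgroup of `J^R(ζ)` for the coadjoint action of `G`
on `𝔤*`. -/
theorem statement8 (x : G) (ζ : TangentSpace I x →L[ℝ] ℝ)
    (y : G) (η : TangentSpace I y →L[ℝ] ℝ) :
    (JR I y η = JR I x ζ ∧ JL I y η = JL I x ζ)
      ↔ ∃ γ : G, AdStar I γ (JR I x ζ) = JR I x ζ ∧
          (⟨y, η⟩ : Σ z : G, (TangentSpace I z →L[ℝ] ℝ)) = PhiR I x ζ γ := by
  constructor
  · rintro ⟨hR, hL⟩
    have e1 : x * (x⁻¹ * y) = y := mul_inv_cancel_left x y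
    have step := congrArg (fun A : TangentSpace I (1 : G) →L[ℝ] ℝ =>
      A.comp (mfderiv I I (fun z : G => z * y⁻¹) y)) hL
    simp only [JL] at step
    replace step := (ContinuousLinearMap.comp_assoc _ _ _).symm.trans (step.trans (ContinuousLinearMap.comp_assoc _ _ _))
    erw [FRgen I y⁻¹ y y 1 (mul_inv_cancel y), FRgen I y⁻¹ x y 1 (mul_inv_cancel y),
      mfd_triv I (y⁻¹ * y) (inv_mul_cancel y) y, ContinuousLinearMap.comp_id] at step
    have hsig : (⟨y, η⟩ : Σ z : G, (TangentSpace I z →L[ℝ] ℝ)) = PhiR I x ζ (x⁻¹ * y) := by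
      have e2 : ζ.comp (mfderiv I I (fun z : G => z * (x⁻¹ * y)⁻¹) (x * (x⁻¹ * y)))
          = ζ.comp (mfderiv I I (fun z : G => z * (y⁻¹ * x)) y) := by
        rw [show ((x⁻¹ * y)⁻¹ : G) = y⁻¹ * x by group, e1]
      refine Sigma.ext e1.symm (heq_of_eq ?_)
      exact step.trans e2.symm
    have hJR := JR_of_sig I x (x⁻¹ * y) y ζ η hsig
    refine ⟨x⁻¹ * y, ?_, hsig⟩
    have hfix : AdStar I (x⁻¹ * y)⁻¹ (JR I x ζ) = JR I x ζ := by rw [← hJR, hR]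
    calc AdStar I (x⁻¹ * y) (JR I x ζ)
        = AdStar I (x⁻¹ * y) (AdStar I (x⁻¹ * y)⁻¹ (JR I x ζ)) := by rw [hfix]
      _ = JR I x ζ := adstar_adstar I _ _
  · rintro ⟨γ, hstab, hsig⟩
    have hJR := JR_of_sig I x γ y ζ η hsig
    refine ⟨?_, JL_of_sig I x γ y ζ η hsig⟩
    rw [hJR, ← hstab, adstar_adstar']
    exact hstab.symm

end
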